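/- Let $\overline{p}(n)$ denote the number of overpartitions of $n$, satisfying $\sum_{n\ge 0} \overline{p}(n) q^n = \prod_{n\ge 1} \frac{1+q^n}{1-q^n}$. Then $\overline{p}(n) = \sum_{\lambda \vdash n} (m_1(\lambda)+1)(m_3(\lambda)+1)(m_5(\lambda)+1)\cdots$, the product running over odd indices. -/

import Mathlib

open Finset PowerSeries

noncomputable def Dser (n : ℕ) : PowerSeries ℝ :=
  PowerSeries.mk fun k => if n ∣ k then 1 else 0

noncomputable def Tser (n : ℕ) : PowerSeries ℝ :=
  PowerSeries.mk fun k => if n ∣ k then ((k / n + 1 : ℕ) : ℝ) else 0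

noncomputable def Gser (n : ℕ) : PowerSeries ℝ := if Odd n then Tser n else Dser n

lemma oneSub_mul_D {n : ℕ} (hn : 1 ≤ n) :
    (1 - (PowerSeries.X : PowerSeries ℝ) ^ n) * Dser n = 1 := by
  have h : (1 - (PowerSeries.X : PowerSeries ℝ) ^ n) * Dser n
      = Dser n - Dser n * PowerSeries.X ^ n := by ring
  rw [h]
  ext k
  rw [map_sub, PowerSeries.coeff_mul_X_pow']
  simp only [Dser, coeff_mk, coeff_one]
  by_cases h1 : n ≤ k
  · have hk : k ≠ 0 := by omega
    have hiff : n ∣ k ↔ n ∣ k - n := by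
      constructor
      · intro h'; exact Nat.dvd_sub h' dvd_rfl
      · intro h'
        have := Nat.dvd_add h' (dvd_refl n)
        rwa [Nat.sub_add_cancel h1] at this
    rw [if_pos h1, if_neg hk]
    by_cases hd : n ∣ k
    · rw [if_pos hd, if_pos (hiff.mp hd)]; ring
    · rw [if_neg hd, if_neg fun h' => hd (hiff.mpr h')]; ring
  · rw [if_neg h1]
    rcases eq_or_ne k 0 with rfl | hk
    · simp
    · have hnd : ¬ n ∣ k := fun hd => hk (Nat.eq_zero_of_dvd_of_lt hd (by omega))
      simp [hnd, hk]

lemma oneSub_mul_T {n : ℕ} (hn : 1 ≤ n) :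
    (1 - (PowerSeries.X : PowerSeries ℝ) ^ n) * Tser n = Dser n := by
  have h : (1 - (PowerSeries.X : PowerSeries ℝ) ^ n) * Tser n
      = Tser n - Tser n * PowerSeries.X ^ n := by ring
  rw [h]
  ext k
  rw [map_sub, PowerSeries.coeff_mul_X_pow']
  simp only [Tser, Dser, coeff_mk]
  by_cases h1 : n ≤ k
  · by_cases hd : n ∣ k
    · have hd' : n ∣ k - n := Nat.dvd_sub hd dvd_rfl
      obtain ⟨q, rfl⟩ := hd
      have hq : 1 ≤ q := by
        rcases Nat.eq_zero_or_pos q with rfl | h; · omega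
        · exact h
      have e1 : n * q / n = q := Nat.mul_div_cancel_left q (by omega)
      have e2 : (n * q - n) / n = q - 1 := by
        rw [show n * q - n = n * (q - 1) by rw [Nat.mul_sub]; omega]
        exact Nat.mul_div_cancel_left _ (by omega)
      rw [if_pos (dvd_mul_right n q), if_pos h1, if_pos hd', e1, e2,
        if_pos (dvd_mul_right n q)]
      have : q - 1 + 1 = q := by omega
      rw [this]
      push_cast
      ring
    · have hd' : ¬ n ∣ k - n := by
        intro h'
        have := Nat.dvd_add h' (dvd_refl n)
        rw [Nat.sub_add_cancel h1] at this
        exact hd this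
      simp [hd, hd', h1]
  · rcases eq_or_ne k 0 with rfl | hk
    · simp; omega
    · have hnd : ¬ n ∣ k := fun hd => hk (Nat.eq_zero_of_dvd_of_lt hd (by omega))
      simp [hnd, h1]

lemma oneSub_ne {n : ℕ} (hn : 1 ≤ n) :
    (1 - (PowerSeries.X : PowerSeries ℝ) ^ n) ≠ 0 := by
  intro h
  have : PowerSeries.constantCoeff (1 - (PowerSeries.X : PowerSeries ℝ) ^ n) = 1 := by
    simp [zero_pow (by omega : n ≠ 0)]
  rw [h] at this
  simp at this

lemma T_eq_D_mul_D {n : ℕ} (hn : 1 ≤ n) : Tser n = Dser n * Dser n := by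
  apply mul_left_cancel₀ (oneSub_ne hn)
  rw [oneSub_mul_T hn, ← mul_assoc, oneSub_mul_D hn, one_mul]

lemma inv_eq_D {n : ℕ} (hn : 1 ≤ n) :
    ((1 - (PowerSeries.X : PowerSeries ℝ) ^ n)⁻¹ : PowerSeries ℝ) = Dser n := by
  rw [PowerSeries.inv_eq_iff_mul_eq_one]
  · rw [mul_comm]; exact oneSub_mul_D hn
  · simp [zero_pow (by omega : n ≠ 0)]

lemma factor_eq {n : ℕ} (hn : 1 ≤ n) :
    (1 + (PowerSeries.X : PowerSeries ℝ) ^ n) * (1 - PowerSeries.X ^ n)⁻¹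
      = (1 - PowerSeries.X ^ (2 * n)) * Tser n := by
  rw [inv_eq_D hn]
  apply mul_left_cancel₀ (mul_ne_zero (oneSub_ne hn) (oneSub_ne hn))
  have swap : (1 - (PowerSeries.X : PowerSeries ℝ) ^ n) * (1 + PowerSeries.X ^ n)
      = 1 - PowerSeries.X ^ (2 * n) := by
    rw [show 2 * n = n + n by ring, pow_add]; ring
  calc (1 - (PowerSeries.X : PowerSeries ℝ) ^ n) * (1 - PowerSeries.X ^ n)
        * ((1 + PowerSeries.X ^ n) * Dser n)
      = ((1 - PowerSeries.X ^ n) * (1 + PowerSeries.X ^ n))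
        * ((1 - PowerSeries.X ^ n) * Dser n) := by ring
    _ = 1 - PowerSeries.X ^ (2 * n) := by rw [oneSub_mul_D hn, swap, mul_one]
    _ = (1 - PowerSeries.X ^ (2 * n))
        * ((1 - PowerSeries.X ^ n) * ((1 - PowerSeries.X ^ n) * Tser n)) := by
        rw [oneSub_mul_T hn, oneSub_mul_D hn, mul_one]
    _ = (1 - PowerSeries.X ^ n) * (1 - PowerSeries.X ^ n)
        * ((1 - PowerSeries.X ^ (2 * n)) * Tser n) := by ring

lemma coeffG {n : ℕ} (k : ℕ) :
    PowerSeries.coeff (R := ℝ) k (Gser n)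
      = if n ∣ k then (if Odd n then ((k / n + 1 : ℕ) : ℝ) else 1) else 0 := by
  by_cases ho : Odd n <;> simp [Gser, Tser, Dser, ho, coeff_mk]

lemma prod_one_sub_dvd {ι : Type*} (k : ℕ) (s : Finset ι) (f : ι → PowerSeries ℝ)
    (h : ∀ i ∈ s, (PowerSeries.X : PowerSeries ℝ) ^ k ∣ f i - 1) :
    (PowerSeries.X : PowerSeries ℝ) ^ k ∣ (∏ i ∈ s, f i) - 1 := by
  induction s using Finset.cons_induction with
  | empty => simp
  | cons a s ha ih =>
    rw [Finset.prod_cons]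
    have h1 := h a (Finset.mem_cons_self a s)
    have h2 := ih fun i hi => h i (Finset.mem_cons_of_mem hi)
    have e : f a * (∏ i ∈ s, f i) - 1 = f a * ((∏ i ∈ s, f i) - 1) + (f a - 1) := by ring
    rw [e]
    exact dvd_add (Dvd.dvd.mul_left h2 _) h1

def partOf (n : ℕ) (l : ℕ →₀ ℕ)
    (hl : l ∈ (Finset.finsuppAntidiag (Finset.Icc 1 n) n).filter
      (fun l : ℕ →₀ ℕ => ∀ m ∈ Finset.Icc 1 n, m ∣ l m)) : Nat.Partition n where
  parts := ∑ m ∈ Finset.Icc 1 n, Multiset.replicate (l m / m) m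
  parts_pos := by
    intro i hi
    rw [Multiset.mem_sum] at hi
    obtain ⟨m, hm, him⟩ := hi
    have := Multiset.eq_of_mem_replicate him
    subst this
    exact (Finset.mem_Icc.mp hm).1
  parts_sum := by
    rw [Finset.mem_filter, Finset.mem_finsuppAntidiag] at hl
    obtain ⟨⟨hsum, _⟩, hdvd⟩ := hl
    have hms : (∑ m ∈ Finset.Icc 1 n, Multiset.replicate (l m / m) m).sum
        = ∑ m ∈ Finset.Icc 1 n, (Multiset.replicate (l m / m) m).sum := by
      rw [← Multiset.coe_sumAddMonoidHom]
      exact map_sum Multiset.sumAddMonoidHom _ _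
    rw [hms]
    simp only [Multiset.sum_replicate, smul_eq_mul]
    calc (∑ m ∈ Finset.Icc 1 n, l m / m * m) = ∑ m ∈ Finset.Icc 1 n, l m := by
          refine Finset.sum_congr rfl fun m hm => ?_
          exact Nat.div_mul_cancel (hdvd m hm)
      _ = n := hsum

lemma count_partOf (n : ℕ) (l : ℕ →₀ ℕ) (hl : l ∈ (Finset.finsuppAntidiag (Finset.Icc 1 n) n).filter
      (fun l : ℕ →₀ ℕ => ∀ m ∈ Finset.Icc 1 n, m ∣ l m)) (i : ℕ) :
    (partOf n l hl).parts.count i = if i ∈ Finset.Icc 1 n then l i / i else 0 := by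
  have hp : (partOf n l hl).parts = ∑ m ∈ Finset.Icc 1 n, Multiset.replicate (l m / m) m := rfl
  rw [hp, Multiset.count_sum']
  simp only [Multiset.count_replicate]
  first
  | exact Finset.sum_ite_eq (Finset.Icc 1 n) i fun m => l m / m
  | exact Finset.sum_ite_eq' (Finset.Icc 1 n) i fun m => l m / m

lemma parts_mem {n : ℕ} (p : Nat.Partition n) {i : ℕ} (hi : i ∈ p.parts) :
    i ∈ Finset.Icc 1 n := by
  rw [Finset.mem_Icc]
  refine ⟨p.parts_pos hi, ?_⟩
  calc i ≤ p.parts.sum := Multiset.single_le_sum (fun x _ => Nat.zero_le x) i hi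
    _ = n := p.parts_sum

lemma sum_parts {n : ℕ} (p : Nat.Partition n) :
    ∑ m ∈ Finset.Icc 1 n, m * p.parts.count m = n := by
  have h2 := Finset.sum_multiset_map_count p.parts (id : ℕ → ℕ)
  rw [Multiset.map_id] at h2
  have h1 : ∑ m ∈ p.parts.toFinset, m * p.parts.count m = n := by
    conv_rhs => rw [← p.parts_sum]
    rw [h2]
    exact Finset.sum_congr rfl fun m _ => by simp [mul_comm]
  refine Finset.sum_subset (fun x hx => parts_mem p (Multiset.mem_toFinset.mp hx))
    (fun x _ hx => ?_) |>.symm.trans h1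
  rw [Multiset.count_eq_zero_of_notMem (fun h => hx (Multiset.mem_toFinset.mpr h)), mul_zero]

noncomputable def finsOf (n : ℕ) (p : Nat.Partition n) : ℕ →₀ ℕ :=
  Finsupp.onFinset (Finset.Icc 1 n) (fun m => m * p.parts.count m)
    (fun m hm => by
      rw [mul_ne_zero_iff] at hm
      exact parts_mem p (Multiset.count_pos.mp (Nat.pos_of_ne_zero hm.2)))

lemma finsOf_mem (n : ℕ) (p : Nat.Partition n) :
    finsOf n p ∈ (Finset.finsuppAntidiag (Finset.Icc 1 n) n).filter
      (fun l : ℕ →₀ ℕ => ∀ m ∈ Finset.Icc 1 n, m ∣ l m) := by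
  rw [Finset.mem_filter, Finset.mem_finsuppAntidiag]
  refine ⟨⟨?_, Finsupp.support_onFinset_subset⟩, fun m _ => ?_⟩
  · have e : ∀ m ∈ Finset.Icc 1 n, finsOf n p m = m * p.parts.count m := fun m _ => rfl
    rw [Finset.sum_congr rfl e]
    exact sum_parts p
  · show m ∣ m * p.parts.count m
    exact dvd_mul_right _ _

theorem stmt7 (op : ℕ → ℝ) (hop0 : op 0 = 1)
    (hgf : ∀ N : ℕ, 1 ≤ N →
      PowerSeries.coeff (R := ℝ) N
        (∏ n ∈ Finset.Icc 1 N,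
          (1 + (PowerSeries.X : PowerSeries ℝ) ^ n) * (1 - PowerSeries.X ^ n)⁻¹) = op N) :
    ∀ n : ℕ, op n =
      ∑ p : Nat.Partition n, ∏ i ∈ (Finset.Icc 1 n).filter (fun i => Odd i),
        ((p.parts.count i : ℝ) + 1) := by
  intro n
  rcases Nat.eq_zero_or_pos n with rfl | hn
  · rw [hop0]
    rw [show Finset.Icc 1 0 = (∅ : Finset ℕ) from Finset.Icc_eq_empty (by omega)]
    simp
  · rw [← hgf n hn]
    -- Step 1: rewrite each factor
    have hf : ∏ m ∈ Finset.Icc 1 n,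
        (1 + (PowerSeries.X : PowerSeries ℝ) ^ m) * (1 - PowerSeries.X ^ m)⁻¹
        = (∏ m ∈ Finset.Icc 1 n, (1 - (PowerSeries.X : PowerSeries ℝ) ^ (2 * m)))
          * ∏ m ∈ Finset.Icc 1 n, Tser m := by
      rw [← Finset.prod_mul_distrib]
      exact Finset.prod_congr rfl fun m hm => factor_eq (Finset.mem_Icc.mp hm).1
    -- Step 2: T = G * (even part D)
    have hT : ∏ m ∈ Finset.Icc 1 n, Tser m
        = (∏ m ∈ Finset.Icc 1 n, Gser m)
          * ∏ m ∈ (Finset.Icc 1 n).filter (fun m => ¬ Odd m), Dser m := by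
      rw [Finset.prod_filter, ← Finset.prod_mul_distrib]
      refine Finset.prod_congr rfl fun m hm => ?_
      have hm1 := (Finset.mem_Icc.mp hm).1
      by_cases ho : Odd m
      · simp [Gser, ho]
      · simp [Gser, ho, T_eq_D_mul_D hm1]
    -- Step 3: split the (1 - X^(2m)) product
    have hIoc : Finset.Icc 1 n = Finset.Ioc 0 n := by
      rw [← Finset.Icc_add_one_left_eq_Ioc, zero_add]
    have hsplit : ∏ m ∈ Finset.Icc 1 n, (1 - (PowerSeries.X : PowerSeries ℝ) ^ (2 * m))
        = (∏ m ∈ Finset.Icc 1 (n / 2), (1 - (PowerSeries.X : PowerSeries ℝ) ^ (2 * m)))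
          * ∏ m ∈ Finset.Ioc (n / 2) n, (1 - (PowerSeries.X : PowerSeries ℝ) ^ (2 * m)) := by
      rw [hIoc, show Finset.Icc 1 (n / 2) = Finset.Ioc 0 (n / 2) from by rw [← Finset.Icc_add_one_left_eq_Ioc, zero_add]]
      exact (Finset.prod_Ioc_consecutive _ (by omega) (by omega)).symm
    -- Step 4: cancellation
    have hcancel : (∏ m ∈ Finset.Icc 1 (n / 2), (1 - (PowerSeries.X : PowerSeries ℝ) ^ (2 * m)))
        * ∏ m ∈ (Finset.Icc 1 n).filter (fun m => ¬ Odd m), Dser m = 1 := by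
      have himg : (Finset.Icc 1 n).filter (fun m => ¬ Odd m)
          = (Finset.Icc 1 (n / 2)).image (fun j => 2 * j) := by
        ext m
        simp only [Finset.mem_filter, Finset.mem_Icc, Finset.mem_image, Nat.not_odd_iff_even,
          Nat.even_iff]
        constructor
        · rintro ⟨⟨h1, h2⟩, h3⟩
          exact ⟨m / 2, ⟨by omega, by omega⟩, by omega⟩
        · rintro ⟨j, ⟨hj1, hj2⟩, rfl⟩
          omega
      rw [himg, Finset.prod_image (fun a _ b _ h => by omega), ← Finset.prod_mul_distrib]
      exact Finset.prod_eq_one fun j hj =>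
        oneSub_mul_D (by have := (Finset.mem_Icc.mp hj).1; omega)
    -- Step 5: assemble
    have hprod : ∏ m ∈ Finset.Icc 1 n,
        (1 + (PowerSeries.X : PowerSeries ℝ) ^ m) * (1 - PowerSeries.X ^ m)⁻¹
        = (∏ m ∈ Finset.Icc 1 n, Gser m)
          * ∏ m ∈ Finset.Ioc (n / 2) n, (1 - (PowerSeries.X : PowerSeries ℝ) ^ (2 * m)) := by
      rw [hf, hT, hsplit]
      calc (∏ m ∈ Finset.Icc 1 (n / 2), (1 - (PowerSeries.X : PowerSeries ℝ) ^ (2 * m)))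
            * (∏ m ∈ Finset.Ioc (n / 2) n, (1 - (PowerSeries.X : PowerSeries ℝ) ^ (2 * m)))
            * ((∏ m ∈ Finset.Icc 1 n, Gser m)
              * ∏ m ∈ (Finset.Icc 1 n).filter (fun m => ¬ Odd m), Dser m)
          = (∏ m ∈ Finset.Icc 1 n, Gser m)
            * (∏ m ∈ Finset.Ioc (n / 2) n, (1 - (PowerSeries.X : PowerSeries ℝ) ^ (2 * m)))
            * ((∏ m ∈ Finset.Icc 1 (n / 2), (1 - (PowerSeries.X : PowerSeries ℝ) ^ (2 * m)))
              * ∏ m ∈ (Finset.Icc 1 n).filter (fun m => ¬ Odd m), Dser m) := by ring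
        _ = _ := by rw [hcancel, mul_one]
    rw [hprod]
    -- Step 6: the tail factor does not affect coefficient n
    have hE : (PowerSeries.X : PowerSeries ℝ) ^ (n + 1)
        ∣ (∏ m ∈ Finset.Ioc (n / 2) n, (1 - (PowerSeries.X : PowerSeries ℝ) ^ (2 * m))) - 1 := by
      refine prod_one_sub_dvd _ _ _ fun m hm => ?_
      have hm' := Finset.mem_Ioc.mp hm
      have : (1 - (PowerSeries.X : PowerSeries ℝ) ^ (2 * m)) - 1 = -(PowerSeries.X ^ (2 * m)) := by
        ring
      rw [this, dvd_neg]
      exact pow_dvd_pow _ (by omega)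
    have hcoeff : (PowerSeries.coeff (R := ℝ) n) ((∏ m ∈ Finset.Icc 1 n, Gser m)
        * ∏ m ∈ Finset.Ioc (n / 2) n, (1 - (PowerSeries.X : PowerSeries ℝ) ^ (2 * m)))
        = PowerSeries.coeff (R := ℝ) n (∏ m ∈ Finset.Icc 1 n, Gser m) := by
      have h0 : (∏ m ∈ Finset.Icc 1 n, Gser m)
          * ∏ m ∈ Finset.Ioc (n / 2) n, (1 - (PowerSeries.X : PowerSeries ℝ) ^ (2 * m))
          = (∏ m ∈ Finset.Icc 1 n, Gser m)
            + (∏ m ∈ Finset.Icc 1 n, Gser m)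
              * ((∏ m ∈ Finset.Ioc (n / 2) n, (1 - (PowerSeries.X : PowerSeries ℝ) ^ (2 * m)))
                - 1) := by ring
      rw [h0, map_add]
      have hz : PowerSeries.coeff (R := ℝ) n ((∏ m ∈ Finset.Icc 1 n, Gser m)
          * ((∏ m ∈ Finset.Ioc (n / 2) n, (1 - (PowerSeries.X : PowerSeries ℝ) ^ (2 * m)))
            - 1)) = 0 :=
        PowerSeries.X_pow_dvd_iff.mp (Dvd.dvd.mul_left hE _) n (by omega)
      rw [hz, add_zero]
    rw [hcoeff, PowerSeries.coeff_prod]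
    -- Step 7: combinatorics
    rw [← Finset.sum_filter_of_ne
      (p := fun l : ℕ →₀ ℕ => ∀ m ∈ Finset.Icc 1 n, m ∣ l m)
      (fun l _ hne m hm => by
        by_contra hdvd
        exact hne (Finset.prod_eq_zero hm (by rw [coeffG]; exact if_neg hdvd)))]
    refine Finset.sum_bij' (fun l hl => partOf n l hl) (fun p _ => finsOf n p)
      (fun l hl => Finset.mem_univ _) (fun p _ => finsOf_mem n p) ?_ ?_ ?_
    · -- left inverse : finsOf (partOf l) = l
      intro l hl
      have hl' := hl
      rw [Finset.mem_filter, Finset.mem_finsuppAntidiag] at hl'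
      obtain ⟨⟨hsum, hsupp⟩, hdvd⟩ := hl'
      ext i
      have e : finsOf n (partOf n l hl) i = i * (partOf n l hl).parts.count i := rfl
      rw [e, count_partOf]
      by_cases hi : i ∈ Finset.Icc 1 n
      · rw [if_pos hi]
        exact Nat.mul_div_cancel' (hdvd i hi)
      · rw [if_neg hi, mul_zero]
        exact (Finsupp.notMem_support_iff.mp (fun hs => hi (hsupp hs))).symm
    · -- right inverse : partOf (finsOf p) = p
      intro p _
      apply Nat.Partition.ext
      have hp : (partOf n (finsOf n p) (finsOf_mem n p)).parts
          = ∑ m ∈ Finset.Icc 1 n, Multiset.replicate ((finsOf n p) m / m) m := rfl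
      rw [hp]
      have e1 : ∀ m ∈ Finset.Icc 1 n,
          Multiset.replicate ((finsOf n p) m / m) m
            = Multiset.replicate (p.parts.count m) m := by
        intro m hm
        have h1 := (Finset.mem_Icc.mp hm).1
        have e : (finsOf n p) m = m * p.parts.count m := rfl
        rw [e, Nat.mul_div_cancel_left _ (by omega)]
      rw [Finset.sum_congr rfl e1]
      calc ∑ m ∈ Finset.Icc 1 n, Multiset.replicate (p.parts.count m) m
          = ∑ m ∈ p.parts.toFinset, Multiset.replicate (p.parts.count m) m := by
            refine (Finset.sum_subset
              (fun x hx => parts_mem p (Multiset.mem_toFinset.mp hx)) fun x _ hx => ?_).symm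
            rw [Multiset.count_eq_zero_of_notMem
              (fun h => hx (Multiset.mem_toFinset.mpr h)), Multiset.replicate_zero]
        _ = ∑ m ∈ p.parts.toFinset, p.parts.count m • ({m} : Multiset ℕ) := by
            simp [Multiset.nsmul_singleton]
        _ = p.parts := Multiset.toFinset_sum_count_nsmul_eq _
    · -- values
      intro l hl
      have hl' := hl
      rw [Finset.mem_filter] at hl'
      obtain ⟨_, hdvd⟩ := hl'
      have e1 : ∀ m ∈ Finset.Icc 1 n,
          PowerSeries.coeff (R := ℝ) (l m) (Gser m)
            = if Odd m then ((l m / m + 1 : ℕ) : ℝ) else 1 := by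
        intro m hm
        rw [coeffG, if_pos (hdvd m hm)]
      rw [Finset.prod_congr rfl e1, ← Finset.prod_filter]
      refine Finset.prod_congr rfl fun i hi => ?_
      rw [Finset.mem_filter] at hi
      rw [count_partOf, if_pos hi.1]
      push_cast
      ring
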